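/- Let A be a Hurwitz d×d real matrix and x₀ ∈ ℝ^d, x₀ ≠ 0. For every pair of numbers 0 ≤ t₁ < t₂, the linear span of the arc Γ(t₁,t₂) = {e^{tA}x₀ : t ∈ [t₁,t₂]} coincides with L_{x₀}, the minimal A-invariant subspace of ℝ^d containing x₀. -/

import Mathlib

open Matrix Set Filter Topology

noncomputable section

/-- A real square matrix is *Hurwitz* if all its (complex) eigenvalues,
i.e. the roots of its characteristic polynomial over `ℂ`, have negative real part. -/
def IsHurwitz {d : ℕ} (A : Matrix (Fin d) (Fin d) ℝ) : Prop :=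
  ∀ μ : ℂ, (A.map (algebraMap ℝ ℂ)).charpoly.IsRoot μ → μ.re < 0

/-- The trajectory `x(t) = e^{tA} x₀` of the linear system `ẋ = Ax`. -/
def traj {d : ℕ} (A : Matrix (Fin d) (Fin d) ℝ) (x₀ : Fin d → ℝ) (t : ℝ) : Fin d → ℝ :=
  (NormedSpace.exp (t • A)).mulVec x₀

/-- Symmetrized convex hull `co_s X = co (X ∪ (−X))`. -/
def symCo {d : ℕ} (X : Set (Fin d → ℝ)) : Set (Fin d → ℝ) :=
  convexHull ℝ (X ∪ (-X))

/-- `G = co_s {x(t) : t ≥ 0}`, the symmetrized convex hull of the whole trajectory. -/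
def trajHull {d : ℕ} (A : Matrix (Fin d) (Fin d) ℝ) (x₀ : Fin d → ℝ) : Set (Fin d → ℝ) :=
  symCo (traj A x₀ '' Ici (0:ℝ))

/-- `T > 0` is a *cut tail point* of the trajectory starting at `x₀` if `x(t)` lies in the
relative (intrinsic) interior of `G` for every `t ≥ T`. -/
def IsCutTailPoint {d : ℕ} (A : Matrix (Fin d) (Fin d) ℝ) (x₀ : Fin d → ℝ) (T : ℝ) : Prop :=
  0 < T ∧ ∀ t, T ≤ t → traj A x₀ t ∈ intrinsicInterior ℝ (trajHull A x₀)

/-- `T_cut(x₀)`: the infimum of all cut tail points of the trajectory starting at `x₀`. -/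
def Tcut {d : ℕ} (A : Matrix (Fin d) (Fin d) ℝ) (x₀ : Fin d → ℝ) : ℝ :=
  sInf {T | IsCutTailPoint A x₀ T}

/-- `L_{x₀}`: the minimal `A`-invariant linear subspace of `ℝ^d` containing `x₀`. -/
def minInv {d : ℕ} (A : Matrix (Fin d) (Fin d) ℝ) (x₀ : Fin d → ℝ) : Submodule ℝ (Fin d → ℝ) :=
  sInf {L | x₀ ∈ L ∧ ∀ v ∈ L, A.mulVec v ∈ L}

/-- A point `x₀` is *generic* if `dim L_{x₀}` equals the degree of the minimal polynomial of `A`. -/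
def IsGeneric {d : ℕ} (A : Matrix (Fin d) (Fin d) ℝ) (x₀ : Fin d → ℝ) : Prop :=
  Module.finrank ℝ (minInv A x₀) = (minpoly ℝ A).natDegree

attribute [local instance] Matrix.linftyOpSemiNormedRing Matrix.linftyOpNormedRing
  Matrix.linftyOpNormedAlgebra

instance {d : ℕ} : CompleteSpace (Matrix (Fin d) (Fin d) ℝ) :=
  FiniteDimensional.complete ℝ _

/-- `M ↦ M.mulVec v` as a continuous linear map. -/
def mulVecCLM {d : ℕ} (v : Fin d → ℝ) :
    Matrix (Fin d) (Fin d) ℝ →L[ℝ] (Fin d → ℝ) :=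
  LinearMap.toContinuousLinearMap
    { toFun := fun M => M.mulVec v
      map_add' := fun M N => Matrix.add_mulVec M N v
      map_smul' := fun c M => Matrix.smul_mulVec c M v }

lemma pow_mulVec_mem {d : ℕ} {A : Matrix (Fin d) (Fin d) ℝ} {L : Submodule ℝ (Fin d → ℝ)}
    (hL : ∀ v ∈ L, A.mulVec v ∈ L) {v : Fin d → ℝ} (hv : v ∈ L) (n : ℕ) :
    (A ^ n).mulVec v ∈ L := by
  induction n with
  | zero => simpa using hv
  | succ n ih =>
    have : (A ^ (n + 1)).mulVec v = A.mulVec ((A ^ n).mulVec v) := by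
      rw [Matrix.mulVec_mulVec, ← pow_succ']
    rw [this]
    exact hL _ ih

lemma exp_mulVec_mem {d : ℕ} {A : Matrix (Fin d) (Fin d) ℝ} {L : Submodule ℝ (Fin d → ℝ)}
    (hL : ∀ v ∈ L, A.mulVec v ∈ L) {v : Fin d → ℝ} (hv : v ∈ L) (t : ℝ) :
    (NormedSpace.exp (t • A)).mulVec v ∈ L := by
  have hs := NormedSpace.exp_series_hasSum_exp' (𝕂 := ℝ) (t • A)
  have hs2 := hs.mapL (mulVecCLM v)
  refine L.closed_of_finiteDimensional.mem_of_tendsto hs2 ?_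
  filter_upwards with s
  refine Submodule.sum_mem _ fun n _ => ?_
  show (((n.factorial : ℝ))⁻¹ • (t • A) ^ n).mulVec v ∈ L
  rw [smul_pow, smul_smul, Matrix.smul_mulVec]
  exact L.smul_mem _ (pow_mulVec_mem hL hv n)

lemma traj_hasDerivAt {d : ℕ} (A : Matrix (Fin d) (Fin d) ℝ) (x₀ : Fin d → ℝ) (t : ℝ) :
    HasDerivAt (traj A x₀) (A.mulVec (traj A x₀ t)) t := by
  have h := (hasDerivAt_exp_smul_const' (𝕂 := ℝ) A t)
  have h2 := ((mulVecCLM x₀).hasFDerivAt.comp_hasDerivAt t h)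
  have : (mulVecCLM x₀) (A * NormedSpace.exp (t • A)) = A.mulVec (traj A x₀ t) := by
    show (A * NormedSpace.exp (t • A)).mulVec x₀ = _
    rw [← Matrix.mulVec_mulVec]; rfl
  exact h2.congr_deriv this

/-- For a Hurwitz matrix `A` and `x₀ ≠ 0`, the linear span of any arc
`Γ(t₁,t₂) = {e^{tA}x₀ : t ∈ [t₁,t₂]}` with `0 ≤ t₁ < t₂` coincides with `L_{x₀}`. -/
theorem span_arc_eq_minInv {d : ℕ} (A : Matrix (Fin d) (Fin d) ℝ) (hA : IsHurwitz A)
    (x₀ : Fin d → ℝ) (hx₀ : x₀ ≠ 0) (t₁ t₂ : ℝ) (ht₁ : 0 ≤ t₁) (ht : t₁ < t₂) :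
    Submodule.span ℝ (traj A x₀ '' Icc t₁ t₂) = minInv A x₀ := by
  set S := Submodule.span ℝ (traj A x₀ '' Icc t₁ t₂) with hS
  have hx0min : x₀ ∈ minInv A x₀ := Submodule.mem_sInf.2 fun L hL => hL.1
  have hmininv : ∀ v ∈ minInv A x₀, A.mulVec v ∈ minInv A x₀ := fun v hv =>
    Submodule.mem_sInf.2 fun L hL => hL.2 v (Submodule.mem_sInf.1 hv L hL)
  -- membership of trajectory points in S
  have htrajS : ∀ s ∈ Icc t₁ t₂, traj A x₀ s ∈ S :=
    fun s hs => Submodule.subset_span (mem_image_of_mem _ hs)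
  -- S is A-invariant
  have hSclosed : IsClosed (S : Set (Fin d → ℝ)) := S.closed_of_finiteDimensional
  have hSinv : ∀ s ∈ Icc t₁ t₂, A.mulVec (traj A x₀ s) ∈ S := by
    intro s hs
    rcases lt_or_eq_of_le hs.2 with h2 | h2
    · have hd := (traj_hasDerivAt A x₀ s).hasDerivWithinAt (s := Ioi s)
      rw [hasDerivWithinAt_iff_tendsto_slope' (notMem_Ioi_self)] at hd
      refine hSclosed.mem_of_tendsto hd ?_
      filter_upwards [Ioo_mem_nhdsGT_of_mem ⟨le_refl s, h2⟩] with y hy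
      rw [slope_def_module]
      exact S.smul_mem _ (S.sub_mem (htrajS y ⟨hs.1.trans hy.1.le, hy.2.le⟩) (htrajS s hs))
    · have hd := (traj_hasDerivAt A x₀ s).hasDerivWithinAt (s := Iio s)
      rw [hasDerivWithinAt_iff_tendsto_slope' (notMem_Iio_self)] at hd
      refine hSclosed.mem_of_tendsto hd ?_
      have h1 : t₁ < s := h2 ▸ ht
      filter_upwards [Ioo_mem_nhdsLT_of_mem ⟨h1, le_refl s⟩] with y hy
      rw [slope_def_module]
      exact S.smul_mem _ (S.sub_mem (htrajS y ⟨hy.1.le, hy.2.le.trans hs.2⟩) (htrajS s hs))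
  have hSinv' : ∀ v ∈ S, A.mulVec v ∈ S := by
    intro v hv
    have : S ≤ Submodule.comap (Matrix.mulVecLin A) S := by
      rw [hS, Submodule.span_le]
      rintro _ ⟨s, hs, rfl⟩
      exact hSinv s hs
    exact this hv
  apply le_antisymm
  · rw [hS, Submodule.span_le]
    rintro _ ⟨s, hs, rfl⟩
    exact exp_mulVec_mem hmininv hx0min s
  · -- x₀ ∈ minInv A (traj A x₀ t₁) ≤ S
    have h1 : minInv A (traj A x₀ t₁) ≤ S :=
      sInf_le ⟨htrajS t₁ ⟨le_refl _, ht.le⟩, hSinv'⟩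
    have hx1 : traj A x₀ t₁ ∈ minInv A (traj A x₀ t₁) := Submodule.mem_sInf.2 fun L hL => hL.1
    have hinv1 : ∀ v ∈ minInv A (traj A x₀ t₁), A.mulVec v ∈ minInv A (traj A x₀ t₁) :=
      fun v hv => Submodule.mem_sInf.2 fun L hL => hL.2 v (Submodule.mem_sInf.1 hv L hL)
    have hx0 : x₀ ∈ minInv A (traj A x₀ t₁) := by
      have := exp_mulVec_mem hinv1 hx1 (-t₁)
      have heq : (NormedSpace.exp ((-t₁) • A)).mulVec (traj A x₀ t₁) = x₀ := by
        show (NormedSpace.exp ((-t₁) • A)).mulVec ((NormedSpace.exp (t₁ • A)).mulVec x₀) = x₀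
        rw [Matrix.mulVec_mulVec]
        erw [← NormedSpace.exp_add_of_commute
          (((Commute.refl A).smul_left (-t₁)).smul_right t₁)]
        norm_num
      rwa [heq] at this
    have : minInv A x₀ ≤ minInv A (traj A x₀ t₁) := sInf_le ⟨hx0, hinv1⟩
    exact this.trans h1
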